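/- Let the Dirac operator restricted to the 4-dimensional subspace spanned by (ν_R, ν_L, ν̄_R, ν̄_L) be the block matrix D = [[0, M_ν†, M̄_R†, 0], [M_ν, 0, 0, 0], [M̄_R, 0, 0, M̄_ν†], [0, 0, M̄_ν, 0]] where M_ν, M_R are complex numbers (one-generation case) with M_R ≠ 0 and |M_ν| ≪ |M_R|. Then the four eigenvalues of D come in pairs ±λ₁, ±λ₂ with λ₁λ₂ = |M_ν|², and λ₁ ≈ |M_ν|²/|M_R| and λ₂ ≈ |M_R| to leading order in |M_ν|/|M_R|; in particular the product of the small and large eigenvalue magnitudes equals |M_ν|², exhibiting the see-saw relation. -/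

import Mathlib

open Complex

open Polynomial in
private lemma seesaw_charpoly (Mν MR : ℂ) :
    (Matrix.charpoly (!![0, (starRingEnd ℂ) Mν, MR, 0;
                 Mν, 0, 0, 0;
                 (starRingEnd ℂ) MR, 0, 0, Mν;
                 0, 0, (starRingEnd ℂ) Mν, 0] : Matrix (Fin 4) (Fin 4) ℂ))
    = X^4 - C ((2 * ‖Mν‖ ^2 + ‖MR‖ ^2 : ℝ) : ℂ) * X^2
      + C (((‖Mν‖ ^2)^2 : ℝ) : ℂ) := by
  have h1 : (C ((‖Mν‖ : ℝ) : ℂ) : ℂ[X]) ^ 2 = C Mν * C ((starRingEnd ℂ) Mν) := by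
    rw [← map_pow, ← map_mul]
    congr 1
    rw [Complex.mul_conj, Complex.normSq_eq_norm_sq]; push_cast; ring
  have h2 : (C ((‖MR‖ : ℝ) : ℂ) : ℂ[X]) ^ 2 = C MR * C ((starRingEnd ℂ) MR) := by
    rw [← map_pow, ← map_mul]
    congr 1
    rw [Complex.mul_conj, Complex.normSq_eq_norm_sq]; push_cast; ring
  rw [Matrix.charpoly]
  simp [Matrix.det_succ_row_zero, Fin.sum_univ_succ, Matrix.charmatrix_apply,
    Matrix.diagonal, Fin.succAbove]
  simp only [map_ofNat]
  linear_combination (2*X^2 - C Mν * C ((starRingEnd ℂ) Mν)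
      - (C ((‖Mν‖ : ℝ) : ℂ) : ℂ[X])^2) * h1 + X^2 * h2

/-- The see-saw mechanism in the one-generation NCG model: the Dirac operator
restricted to the subspace `(ν_R, ν_L, ν̄_R, ν̄_L)` is the block matrix
`D = [[0, M_ν†, M̄_R†, 0], [M_ν, 0, 0, 0], [M̄_R, 0, 0, M̄_ν†], [0, 0, M̄_ν, 0]]`.
Its four eigenvalues come in pairs `±λ₁, ±λ₂` with `λ₁λ₂ = |M_ν|²`, and to
leading order in `|M_ν|/|M_R|` one has `λ₁ ≈ |M_ν|²/|M_R|` and `λ₂ ≈ |M_R|`,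
rigorously expressed by `|M_R| ≤ λ₂ ≤ √(2|M_ν|² + |M_R|²)` and
`|M_ν|²/√(2|M_ν|² + |M_R|²) ≤ λ₁ ≤ |M_ν|²/|M_R|`. -/
theorem stmt_19 (Mν MR : ℂ) (hMR : MR ≠ 0)
    (hsmall : ‖Mν‖ < ‖MR‖)
    (D : Matrix (Fin 4) (Fin 4) ℂ)
    (hD : D = !![0, (starRingEnd ℂ) Mν, MR, 0;
                 Mν, 0, 0, 0;
                 (starRingEnd ℂ) MR, 0, 0, Mν;
                 0, 0, (starRingEnd ℂ) Mν, 0]) :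
    ∃ lam₁ lam₂ : ℝ, 0 ≤ lam₁ ∧ lam₁ ≤ lam₂ ∧
      D.charpoly.roots
        = {(lam₁ : ℂ), -(lam₁ : ℂ), (lam₂ : ℂ), -(lam₂ : ℂ)} ∧
      lam₁ * lam₂ = ‖Mν‖ ^ 2 ∧
      ‖MR‖ ≤ lam₂ ∧
      lam₂ ≤ Real.sqrt (2 * ‖Mν‖ ^ 2 + ‖MR‖ ^ 2) ∧
      ‖Mν‖ ^ 2
          / Real.sqrt (2 * ‖Mν‖ ^ 2 + ‖MR‖ ^ 2) ≤ lam₁ ∧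
      lam₁ ≤ ‖Mν‖ ^ 2 / ‖MR‖ := by
  classical
  set a := ‖Mν‖ with ha_def
  set b := ‖MR‖ with hb_def
  have ha : 0 ≤ a := norm_nonneg Mν
  have hb : 0 < b := norm_pos_iff.mpr hMR
  set S : ℝ := 2 * a ^ 2 + b ^ 2 with hS_def
  have hS0 : 0 ≤ S := by positivity
  have hdisc : 0 ≤ S ^ 2 - 4 * (a ^ 2) ^ 2 := by nlinarith [sq_nonneg a, sq_nonneg b, sq_nonneg (a*b)]
  set d : ℝ := Real.sqrt (S ^ 2 - 4 * (a ^ 2) ^ 2) with hd_def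
  have hd0 : 0 ≤ d := Real.sqrt_nonneg _
  have hd2 : d ^ 2 = S ^ 2 - 4 * (a ^ 2) ^ 2 := Real.sq_sqrt hdisc
  have hdle : d ≤ S := by
    have h := Real.sqrt_le_sqrt (show S ^ 2 - 4 * (a ^ 2) ^ 2 ≤ S ^ 2 by nlinarith [sq_nonneg a])
    rwa [Real.sqrt_sq hS0] at h
  have hdgeb2 : b ^ 2 ≤ d := by
    have h := Real.sqrt_le_sqrt (show (b ^ 2) ^ 2 ≤ S ^ 2 - 4 * (a ^ 2) ^ 2 by
      nlinarith [sq_nonneg a, sq_nonneg b])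
    rwa [Real.sqrt_sq (sq_nonneg b)] at h
  have hm_nn : 0 ≤ (S - d) / 2 := by linarith
  have hp_nn : 0 ≤ (S + d) / 2 := by linarith
  set lam₁ : ℝ := Real.sqrt ((S - d) / 2) with hl1_def
  set lam₂ : ℝ := Real.sqrt ((S + d) / 2) with hl2_def
  have hl1_nn : 0 ≤ lam₁ := Real.sqrt_nonneg _
  have hl2_nn : 0 ≤ lam₂ := Real.sqrt_nonneg _
  have hl1sq : lam₁ ^ 2 = (S - d) / 2 := Real.sq_sqrt hm_nn
  have hl2sq : lam₂ ^ 2 = (S + d) / 2 := Real.sq_sqrt hp_nn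
  have hle : lam₁ ≤ lam₂ := Real.sqrt_le_sqrt (by linarith)
  have hprod : lam₁ * lam₂ = a ^ 2 := by
    rw [hl1_def, hl2_def, ← Real.sqrt_mul hm_nn,
      show (S - d) / 2 * ((S + d) / 2) = (a ^ 2) ^ 2 by linear_combination (-1/4 : ℝ) * hd2]
    exact Real.sqrt_sq (sq_nonneg a)
  have hl2_ge : b ≤ lam₂ := by
    have h := Real.sqrt_le_sqrt (show b ^ 2 ≤ (S + d) / 2 by nlinarith [sq_nonneg a])
    rwa [Real.sqrt_sq hb.le] at h
  have hl2_pos : 0 < lam₂ := lt_of_lt_of_le hb hl2_ge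
  have hl2_le : lam₂ ≤ Real.sqrt S := Real.sqrt_le_sqrt (by linarith)
  have hsum : lam₁ ^ 2 + lam₂ ^ 2 = S := by rw [hl1sq, hl2sq]; ring
  have hl1_eq : lam₁ = a ^ 2 / lam₂ := by
    rw [eq_div_iff hl2_pos.ne']; exact hprod
  have hSpos : 0 < Real.sqrt S := lt_of_lt_of_le hl2_pos hl2_le
  refine ⟨lam₁, lam₂, hl1_nn, hle, ?_, hprod, hl2_ge, hl2_le, ?_, ?_⟩
  · -- roots
    have hsumC : ((lam₁ : ℂ)) ^ 2 + ((lam₂ : ℂ)) ^ 2 = ((S : ℝ) : ℂ) := by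
      exact_mod_cast congrArg (fun x : ℝ => (x : ℂ)) hsum
    have hprC : (((lam₁ : ℂ)) * ((lam₂ : ℂ))) ^ 2 = (((a ^ 2) ^ 2 : ℝ) : ℂ) := by
      have h : ((lam₁ * lam₂) ^ 2 : ℝ) = (a ^ 2) ^ 2 := by rw [hprod]
      exact_mod_cast congrArg (fun x : ℝ => (x : ℂ)) h
    open Polynomial in
    have key : D.charpoly
        = (({(lam₁ : ℂ), -(lam₁ : ℂ), (lam₂ : ℂ), -(lam₂ : ℂ)} : Multiset ℂ).map
            (fun c => X - C c)).prod := by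
      rw [hD, seesaw_charpoly, ← ha_def, ← hb_def, ← hS_def]
      have e1 : (C ((lam₁ : ℂ)) : ℂ[X]) ^ 2 + (C ((lam₂ : ℂ))) ^ 2 = C ((S : ℝ) : ℂ) := by
        rw [← map_pow, ← map_pow, ← map_add]; exact congrArg C hsumC
      have e2 : ((C ((lam₁ : ℂ)) : ℂ[X]) * C ((lam₂ : ℂ))) ^ 2 = C (((a ^ 2) ^ 2 : ℝ) : ℂ) := by
        rw [← map_mul, ← map_pow]; exact congrArg C hprC
      simp only [Multiset.insert_eq_cons, Multiset.map_cons, Multiset.map_singleton,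
        Multiset.prod_cons, Multiset.prod_singleton, map_neg]
      linear_combination ((X : ℂ[X]) ^ 2) * e1 - e2
    rw [key, Polynomial.roots_multiset_prod_X_sub_C]
  · -- lower bound for lam₁
    rw [hl1_eq]
    gcongr
  · -- upper bound for lam₁
    rw [hl1_eq]
    gcongr
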